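/- Let B_I be a model of annotated revision program P. Then B_I is a P-justified revision of itself if and only if B_I is an s-model of P. -/
import Mathlib


namespace ARP

variable (U T : Type*)

/-- Revision atoms: `(true, a)` is `in(a)`, `(false, a)` is `out(a)`. -/
abbrev RevAtom := Bool × U
/-- Annotated revision atoms `(l : α)`. -/
abbrev AnnAtom := (RevAtom U) × T
/-- An annotated revision rule: a head and a list of body atoms. -/
abbrev Rule := AnnAtom U T × List (AnnAtom U T)
/-- An annotated revision program: a set of rules. -/
abbrev Program := Set (Rule U T)
/-- T-valuations of revision atoms. -/
abbrev TVal := RevAtom U → T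
/-- T²-valuations of atoms, with the pointwise (knowledge) ordering. -/
abbrev Val := U → T × T

variable {U T} [CompleteDistribLattice T]

/-- A T-valuation satisfies `(l : α)` iff `v l ≥ α`. -/
def satA (v : TVal U T) (q : AnnAtom U T) : Prop := q.2 ≤ v q.1

/-- The bijection θ⁻¹ from T²-valuations to T-valuations. -/
def thetaInv (B : Val U T) : TVal U T := fun l => if l.1 then (B l.2).1 else (B l.2).2

/-- The van Emden-Kowalski style operator on T-valuations. -/
def TP (P : Program U T) (v : TVal U T) : TVal U T :=
  fun l => sSup {α | ∃ r ∈ P, r.1 = (l, α) ∧ ∀ q ∈ r.2, satA v q}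

/-- The operator `T_P^b = θ ∘ T_P ∘ θ⁻¹` on T²-valuations. -/
def TPb (P : Program U T) (B : Val U T) : Val U T :=
  fun a => (TP P (thetaInv B) (true, a), TP P (thetaInv B) (false, a))

/-- Conflation on T², relative to a De Morgan complement `c` on T. -/
def conf (c : T → T) (p : T × T) : T × T := (c p.2, c p.1)

/-- Conflation extended pointwise to T²-valuations. -/
def confV (c : T → T) (B : Val U T) : Val U T := fun a => conf c (B a)

/-- `B` is a model of `P`: it satisfies every rule of `P`. -/
def isModel (P : Program U T) (B : Val U T) : Prop :=
  ∀ r ∈ P, (∀ q ∈ r.2, satA (thetaInv B) q) → satA (thetaInv B) r.1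

/-- `B` is an s-model of `P`. -/
def isSModel (c : T → T) (P : Program U T) (B : Val U T) : Prop :=
  TPb P B ≤ B ∧ B ≤ TPb P B ⊔ confV c (TPb P B)

/-- The relative pseudocomplement: the least `γ` with `α ⊔ γ ≥ β`. -/
def pcomp (α β : T) : T := sInf {γ | β ≤ α ⊔ γ}

/-- The reduct `P_{B_R}|B_I`. -/
def reduct (P : Program U T) (BR BI : Val U T) : Program U T :=
  { r' | ∃ r ∈ P, (∀ q ∈ r.2, satA (thetaInv BR) q) ∧
      r' = (r.1, r.2.map (fun q => (q.1, pcomp (thetaInv BI q.1) q.2))) }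

/-- The necessary change: the least (pre)fixpoint of `T_P^b`. -/
def NC (P : Program U T) : Val U T := sInf {B | TPb P B ≤ B}

/-- A T²-valuation is consistent if `B ≤ₖ -B`. -/
def consistentVal (c : T → T) (B : Val U T) : Prop := B ≤ confV c B

/-- `B_R` is a `P`-justified revision of `B_I`. -/
def JRev (c : T → T) (P : Program U T) (BI BR : Val U T) : Prop :=
  BR = (BI ⊓ confV c (NC (reduct P BR BI))) ⊔ NC (reduct P BR BI)

end ARP

open ARP

section Aux
variable {U T : Type*} [CompleteDistribLattice T]

lemma pcomp_eq_bot {a b : T} (h : b ≤ a) : ARP.pcomp a b = ⊥ :=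
  le_antisymm (sInf_le (show b ≤ a ⊔ ⊥ from h.trans le_sup_left)) bot_le

lemma TP_reduct (P : Program U T) (BI : Val U T) (w : TVal U T) :
    TP (reduct P BI BI) w = TP P (thetaInv BI) := by
  funext l
  refine congrArg sSup (Set.ext fun α => ⟨?_, ?_⟩)
  · rintro ⟨r', ⟨r, hrP, hbodyv, rfl⟩, hhead, hbodyw⟩
    exact ⟨r, hrP, hhead, hbodyv⟩
  · rintro ⟨r, hrP, hhead, hbody⟩
    refine ⟨(r.1, r.2.map (fun q => (q.1, pcomp (thetaInv BI q.1) q.2))),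
      ⟨r, hrP, hbody, rfl⟩, hhead, ?_⟩
    rintro q' hq'
    rcases List.mem_map.1 hq' with ⟨q, hq, rfl⟩
    show pcomp (thetaInv BI q.1) q.2 ≤ w q.1
    rw [pcomp_eq_bot (hbody q hq)]
    exact bot_le

lemma TPb_reduct (P : Program U T) (BI B : Val U T) :
    TPb (reduct P BI BI) B = TPb P BI := by
  funext a
  show (TP (reduct P BI BI) (thetaInv B) (true, a), TP (reduct P BI BI) (thetaInv B) (false, a)) = _
  rw [TP_reduct]
  rfl

lemma NC_reduct (P : Program U T) (BI : Val U T) :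
    NC (reduct P BI BI) = TPb P BI := by
  have : {B : Val U T | TPb (reduct P BI BI) B ≤ B} = {B | TPb P BI ≤ B} := by
    ext B; rw [Set.mem_setOf_eq, TPb_reduct]; rfl
  rw [NC, this]
  exact le_antisymm (sInf_le (show TPb P BI ≤ TPb P BI from le_rfl)) (le_sInf fun b hb => hb)

lemma TPb_le_of_model (P : Program U T) (BI : Val U T) (hmod : isModel P BI) :
    TPb P BI ≤ BI := by
  have hTP : ∀ l, TP P (thetaInv BI) l ≤ thetaInv BI l := by
    intro l
    refine sSup_le ?_
    rintro α ⟨r, hrP, hhead, hbody⟩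
    have := hmod r hrP hbody
    rw [hhead] at this
    exact this
  intro a
  exact ⟨hTP (true, a), hTP (false, a)⟩

end Aux

theorem self_jrev_iff_smodel {U T : Type*} [CompleteDistribLattice T]
    (c : T → T)
    (hinv : ∀ a, c (c a) = a)
    (hdm1 : ∀ a b : T, c (a ⊔ b) = c a ⊓ c b)
    (hdm2 : ∀ a b : T, c (a ⊓ b) = c a ⊔ c b)
    (P : ARP.Program U T) (BI : ARP.Val U T)
    (hmod : ARP.isModel P BI) :
    ARP.JRev c P BI BI ↔ ARP.isSModel c P BI := by
  have hD : TPb P BI ≤ BI := TPb_le_of_model P BI hmod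
  rw [ARP.JRev, NC_reduct, ARP.isSModel]
  set D := TPb P BI
  set X := confV c D
  constructor
  · intro h
    refine ⟨hD, ?_⟩
    conv_lhs => rw [h]
    exact sup_le (inf_le_right.trans le_sup_right) le_sup_left
  · rintro ⟨_, h2⟩
    refine le_antisymm ?_ (sup_le inf_le_left hD)
    calc BI = BI ⊓ (D ⊔ X) := (inf_eq_left.2 h2).symm
    _ = (BI ⊓ D) ⊔ (BI ⊓ X) := inf_sup_left _ _ _
    _ ≤ (BI ⊓ X) ⊔ D := sup_le (inf_le_right.trans le_sup_right) le_sup_left
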